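/- Let ξ_1,…,ξ_N be i.i.d. N(0,1), X^1,…,X^N i.i.d. uniform on T², independent of the ξ's, and θ^N = N^{-1/2} Σ_n ξ_n δ_{X^n}. Then for every p ≥ 1 and δ > 0 there is a constant c_{p,δ} independent of N with E[‖θ^N‖^p_{H^{-1-δ}(T²)}] ≤ c_{p,δ}. -/

import Mathlib

open MeasureTheory Filter ProbabilityTheory
noncomputable section

/-- The plane `ℝ²`; the torus `𝕋² = ℝ²/ℤ²` is modelled by `ℤ²`-periodic functions on `E2`
together with the fundamental domain `Q2 = [0,1)²`. -/
abbrev E2 : Type := EuclideanSpace ℝ (Fin 2)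

/-- Fundamental domain `[0,1)²` of the torus. -/
def Q2 : Set E2 := {x | ∀ i, x i ∈ Set.Ico (0:ℝ) 1}

/-- Normalized Lebesgue (Haar) measure of the torus, as the restriction of Lebesgue measure
to the fundamental domain. -/
def μT : Measure E2 := volume.restrict Q2

/-- The lattice `ℤ² ⊆ ℝ²`. -/
def lat : Set E2 := {v | ∀ i, ∃ k : ℤ, v i = (k : ℝ)}

/-- Distance of `x` to the lattice, i.e. the norm `|x|` on the torus. -/
def tnorm (x : E2) : ℝ := ⨅ v : lat, ‖x - (v : E2)‖

/-- `|n|²` for a Fourier mode `n ∈ ℤ²`. -/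
def nsq (n : ℤ × ℤ) : ℝ := (n.1 : ℝ)^2 + (n.2 : ℝ)^2

/-- The Fourier character `e_k(x) = exp(2πi k·x)` on the torus. -/
def ek (k : ℤ × ℤ) (x : E2) : ℂ :=
  Complex.exp (2 * Real.pi * Complex.I * ((k.1 : ℂ) * (x 0 : ℂ) + (k.2 : ℂ) * (x 1 : ℂ)))

open scoped ENNReal NNReal

namespace Stmt18Aux
lemma gauss_integrable (e : ℕ) : Integrable (fun x : ℝ => x ^ e) (gaussianReal 0 1) := by
  rw [gaussianReal_of_var_ne_zero 0 one_ne_zero]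
  rw [integrable_withDensity_iff (measurable_gaussianPDF 0 1)
    (ae_of_all _ fun x => ENNReal.ofReal_lt_top)]
  have h := ((integrable_rpow_mul_exp_neg_mul_sq (b := 2⁻¹) (by norm_num)
    (s := (e : ℝ)) ((by norm_num : (-1:ℝ) < 0).trans_le (Nat.cast_nonneg e))).const_mul
    ((Real.sqrt (2 * Real.pi))⁻¹))
  refine h.congr (ae_of_all _ fun x => ?_)
  simp only [gaussianPDF]
  rw [ENNReal.toReal_ofReal (gaussianPDFReal_nonneg _ _ _)]
  simp only [gaussianPDFReal]
  rw [Real.rpow_natCast]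
  push_cast
  ring_nf

lemma gauss_odd (e : ℕ) (he : Odd e) : ∫ x, x ^ e ∂(gaussianReal 0 1) = 0 := by
  have hmap : (gaussianReal 0 1).map (fun x => (-1 : ℝ) * x) = gaussianReal 0 1 := by
    have h := gaussianReal_map_const_mul (μ := 0) (v := 1) (-1)
    have h2 : (⟨(-1:ℝ)^2, sq_nonneg _⟩ : ℝ≥0) * 1 = 1 := Subtype.ext (by norm_num)
    rw [h]
    congr 1
    · simp
  have h1 : ∫ x, x ^ e ∂(gaussianReal 0 1) = ∫ x, ((-1 : ℝ) * x) ^ e ∂(gaussianReal 0 1) := by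
    conv_lhs => rw [← hmap]
    rw [integral_map (by fun_prop) (by fun_prop)]
  have h2 : ∫ x, ((-1 : ℝ) * x) ^ e ∂(gaussianReal 0 1) = - ∫ x, x ^ e ∂(gaussianReal 0 1) := by
    simp_rw [mul_pow, he.neg_one_pow, neg_one_mul]
    exact integral_neg _
  linarith [h1, h2]

/-- `e`-th moment of the standard gaussian. -/
def Mom (e : ℕ) : ℝ := ∫ x, x ^ e ∂(gaussianReal 0 1)

/-- A uniform bound for the moments of order at most `2m`. -/
def Km (m : ℕ) : ℝ := 1 + Mom (2 * m)

lemma Km_ge_one (m : ℕ) : 1 ≤ Km m := by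
  have : 0 ≤ Mom (2 * m) := by
    refine integral_nonneg fun x => ?_
    rw [pow_mul]
    exact pow_nonneg (sq_nonneg x) m
  simp only [Km]; linarith

lemma Mom_abs_le (m e : ℕ) (he : e ≤ 2 * m) : |Mom e| ≤ Km m := by
  have habs : |Mom e| ≤ ∫ x, |x ^ e| ∂(gaussianReal 0 1) := by
    simpa [Mom, Real.norm_eq_abs] using
      norm_integral_le_integral_norm (μ := gaussianReal 0 1) (fun x : ℝ => x ^ e)
  have hpt : ∀ x : ℝ, |x ^ e| ≤ 1 + x ^ (2 * m) := by
    intro x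
    rw [abs_pow]
    have h2m : (0:ℝ) ≤ x ^ (2 * m) := by rw [pow_mul]; exact pow_nonneg (sq_nonneg x) m
    rcases le_or_gt |x| 1 with h | h
    · have : |x| ^ e ≤ 1 := pow_le_one₀ (abs_nonneg x) h
      linarith
    · have h1 : |x| ^ e ≤ |x| ^ (2 * m) := pow_le_pow_right₀ h.le he
      rw [(even_two_mul m).pow_abs] at h1
      linarith
  have hint : ∫ x, |x ^ e| ∂(gaussianReal 0 1) ≤ ∫ x, (1 + x ^ (2 * m)) ∂(gaussianReal 0 1) := by
    refine integral_mono (gauss_integrable e).abs ((integrable_const 1).add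
      (gauss_integrable (2 * m))) hpt
  have heq : ∫ x, (1 + x ^ (2 * m)) ∂(gaussianReal 0 1) = Km m := by
    rw [integral_add (integrable_const 1) (gauss_integrable (2 * m))]
    simp [Km, Mom]
  linarith

lemma indep_prod_integral {Ω : Type*} {mΩ : MeasurableSpace Ω} {P : Measure Ω}
    [IsProbabilityMeasure P] {ι : Type*} {f : ι → Ω → ℝ}
    (hi : iIndepFun f P)
    (hm : ∀ i, Measurable (f i)) (hint : ∀ i, Integrable (f i) P) (s : Finset ι) :
    Integrable (∏ i ∈ s, f i) P ∧
      ∫ ω, (∏ i ∈ s, f i) ω ∂P = ∏ i ∈ s, ∫ ω, f i ω ∂P := by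
  classical
  induction s using Finset.induction_on with
  | empty =>
    constructor
    · simp only [Finset.prod_empty]; exact integrable_const (1:ℝ)
    · simp
  | @insert a s ha ih =>
    obtain ⟨ih1, ih2⟩ := ih
    have hindep : IndepFun (f a) (∏ j ∈ s, f j) P :=
      (hi.indepFun_finset_prod_of_notMem hm ha).symm
    rw [Finset.prod_insert ha]
    constructor
    · exact hindep.integrable_mul (hint a) ih1
    · rw [hindep.integral_mul_eq_mul_integral (hint a).aestronglyMeasurable ih1.aestronglyMeasurable, ih2, Finset.prod_insert ha]

lemma count_even (N m : ℕ) (hN : 0 < N) :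
    (Finset.univ.filter (fun g : Fin (2 * m) → Fin N =>
      ∀ n ∈ Finset.univ.image g,
        Even ((Finset.univ.filter (fun i => g i = n)).card))).card
      ≤ (m + 1) * m ^ (2 * m) * N ^ m := by
  classical
  set K := 2 * m with hK
  -- the image of such a `g` has at most `m` elements
  have himg : ∀ g : Fin K → Fin N, (∀ n ∈ Finset.univ.image g,
      Even ((Finset.univ.filter (fun i => g i = n)).card)) →
      (Finset.univ.image g).card ≤ m := by
    intro g hg
    have hsum : ∑ n ∈ Finset.univ.image g,
        (Finset.univ.filter (fun i => g i = n)).card = K := by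
      have := Finset.card_eq_sum_card_image g (Finset.univ : Finset (Fin K))
      simpa using this.symm
    have h2 : ∀ n ∈ Finset.univ.image g,
        2 ≤ (Finset.univ.filter (fun i => g i = n)).card := by
      intro n hn
      have h1 : 1 ≤ (Finset.univ.filter (fun i => g i = n)).card := by
        obtain ⟨i, _, hi⟩ := Finset.mem_image.mp hn
        refine Finset.card_pos.mpr ⟨i, ?_⟩
        simp [hi]
      obtain ⟨t, ht⟩ := hg n hn
      omega
    have := Finset.card_nsmul_le_sum (Finset.univ.image g) _ 2 h2
    rw [hsum] at this
    simp only [smul_eq_mul] at this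
    omega
  -- inclusion into a union over small sets
  have hsub : (Finset.univ.filter (fun g : Fin K → Fin N =>
      ∀ n ∈ Finset.univ.image g,
        Even ((Finset.univ.filter (fun i => g i = n)).card)))
      ⊆ ((Finset.univ : Finset (Fin N)).powerset.filter (fun s => s.card ≤ m)).biUnion
          (fun s => Finset.univ.filter (fun g : Fin K → Fin N => ∀ i, g i ∈ s)) := by
    intro g hg
    rw [Finset.mem_filter] at hg
    rw [Finset.mem_biUnion]
    refine ⟨Finset.univ.image g, ?_, ?_⟩
    · rw [Finset.mem_filter]
      exact ⟨Finset.mem_powerset.mpr (Finset.subset_univ _), himg g hg.2⟩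
    · rw [Finset.mem_filter]
      exact ⟨Finset.mem_univ _, fun i => Finset.mem_image_of_mem g (Finset.mem_univ i)⟩
  refine le_trans (Finset.card_le_card hsub) ?_
  refine le_trans (Finset.card_biUnion_le) ?_
  have hinner : ∀ s : Finset (Fin N), s.card ≤ m →
      (Finset.univ.filter (fun g : Fin K → Fin N => ∀ i, g i ∈ s)).card ≤ m ^ K := by
    intro s hs
    have : (Finset.univ.filter (fun g : Fin K → Fin N => ∀ i, g i ∈ s))
        = Fintype.piFinset (fun _ : Fin K => s) := by
      ext g; simp [Fintype.mem_piFinset]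
    rw [this, Fintype.card_piFinset]
    calc ∏ _i : Fin K, s.card ≤ ∏ _i : Fin K, m := Finset.prod_le_prod' (fun _ _ => hs)
    _ = m ^ K := by simp [Finset.prod_const]
  have houter : ((Finset.univ : Finset (Fin N)).powerset.filter (fun s => s.card ≤ m)).card
      ≤ (m + 1) * N ^ m := by
    have hsub2 : ((Finset.univ : Finset (Fin N)).powerset.filter (fun s => s.card ≤ m))
        ⊆ (Finset.range (m + 1)).biUnion
            (fun j => Finset.powersetCard j (Finset.univ : Finset (Fin N))) := by
      intro s hs
      rw [Finset.mem_filter] at hs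
      rw [Finset.mem_biUnion]
      exact ⟨s.card, Finset.mem_range.mpr (Nat.lt_succ_of_le hs.2),
        Finset.mem_powersetCard_univ.mpr rfl⟩
    refine le_trans (Finset.card_le_card hsub2) ?_
    refine le_trans (Finset.card_biUnion_le) ?_
    calc ∑ j ∈ Finset.range (m + 1), (Finset.powersetCard j (Finset.univ : Finset (Fin N))).card
        = ∑ j ∈ Finset.range (m + 1), N.choose j := by
          refine Finset.sum_congr rfl fun j _ => ?_
          rw [Finset.card_powersetCard]
          simp
      _ ≤ ∑ j ∈ Finset.range (m + 1), N ^ m := by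
          refine Finset.sum_le_sum fun j hj => ?_
          refine le_trans (Nat.choose_le_pow N j) ?_
          exact Nat.pow_le_pow_right hN (Nat.lt_succ_iff.mp (Finset.mem_range.mp hj))
      _ = (m + 1) * N ^ m := by simp [Finset.sum_const, mul_comm]
  calc ∑ s ∈ ((Finset.univ : Finset (Fin N)).powerset.filter (fun s => s.card ≤ m)),
        (Finset.univ.filter (fun g : Fin K → Fin N => ∀ i, g i ∈ s)).card
      ≤ ∑ s ∈ ((Finset.univ : Finset (Fin N)).powerset.filter (fun s => s.card ≤ m)), m ^ K := by
        refine Finset.sum_le_sum fun s hs => ?_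
        exact hinner s (Finset.mem_filter.mp hs).2
    _ = ((Finset.univ : Finset (Fin N)).powerset.filter (fun s => s.card ≤ m)).card * m ^ K := by
        simp [Finset.sum_const, mul_comm]
    _ ≤ ((m + 1) * N ^ m) * m ^ K := Nat.mul_le_mul_right _ houter
    _ = (m + 1) * m ^ K * N ^ m := by ring


lemma core_moment {N : ℕ} (m : ℕ) (hN : 0 < N)
    {Ξ : Type} {mΞ : MeasurableSpace Ξ} {P : Measure Ξ}
    [IsProbabilityMeasure P] {β : Type*} {mβ : MeasurableSpace β}
    (ξ : Fin N → Ξ → ℝ) (X : Fin N → Ξ → β)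
    (hξm : ∀ n, Measurable (ξ n)) (hXm : ∀ n, Measurable (X n))
    (hξi : iIndepFun ξ P)
    (hξl : ∀ n, Measure.map (ξ n) P = gaussianReal 0 1)
    (hIndep : IndepFun (fun ω => fun n => ξ n ω) (fun ω => fun n => X n ω) P)
    (c : β → ℝ) (hc : Measurable c) (hc1 : ∀ x, |c x| ≤ 1) :
    Integrable (fun ω => (∑ n, ξ n ω * c (X n ω)) ^ (2 * m)) P ∧
    ∫ ω, (∑ n, ξ n ω * c (X n ω)) ^ (2 * m) ∂P ≤
      ((m : ℝ) + 1) * (m : ℝ) ^ (2 * m) * Km m ^ (2 * m) * (N : ℝ) ^ m := by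
  classical
  set K := 2 * m with hK
  -- integrability and moments of powers of the gaussians
  have hξe : ∀ (n : Fin N) (e : ℕ), Integrable (fun ω => ξ n ω ^ e) P := by
    intro n e
    have h1 : Integrable (fun x : ℝ => x ^ e) (Measure.map (ξ n) P) := by
      rw [hξl n]; exact gauss_integrable e
    rw [integrable_map_measure (by fun_prop) (hξm n).aemeasurable] at h1
    exact h1
  have hξmom : ∀ (n : Fin N) (e : ℕ), ∫ ω, ξ n ω ^ e ∂P = Mom e := by
    intro n e
    rw [Mom, ← hξl n, integral_map (hξm n).aemeasurable (by fun_prop)]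
  -- notation
  set d : (Fin K → Fin N) → Fin N → ℕ :=
    fun g n => (Finset.univ.filter (fun i => g i = n)).card with hd
  set U : (Fin K → Fin N) → Ξ → ℝ := fun g ω => ∏ i, ξ (g i) ω with hU
  set V : (Fin K → Fin N) → Ξ → ℝ := fun g ω => ∏ i, c (X (g i) ω) with hV
  -- expansion of the power of the sum
  have hexp : ∀ ω, (∑ n, ξ n ω * c (X n ω)) ^ K = ∑ g : Fin K → Fin N, U g ω * V g ω := by
    intro ω
    have h1 : (∑ n, ξ n ω * c (X n ω)) ^ K = ∏ _i : Fin K, (∑ n, ξ n ω * c (X n ω)) := by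
      simp [Finset.prod_const]
    rw [h1, Finset.prod_univ_sum]
    rw [Fintype.piFinset_univ]
    refine Finset.sum_congr rfl fun g _ => ?_
    rw [hU, hV, ← Finset.prod_mul_distrib]
  -- rewrite of U as a product of powers over the image
  have hUrw : ∀ g (ω : Ξ), U g ω = ∏ n ∈ Finset.univ.image g, ξ n ω ^ d g n := by
    intro g ω
    exact Finset.prod_comp (fun n => ξ n ω) g
  -- integrability and value of the integral of U
  have hUfacts : ∀ g, Integrable (U g) P ∧
      ∫ ω, U g ω ∂P = ∏ n ∈ Finset.univ.image g, Mom (d g n) := by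
    intro g
    have hcomp : iIndepFun
        (fun n => (fun x : ℝ => x ^ d g n) ∘ ξ n) P :=
      hξi.comp _ (fun n => measurable_id.pow_const (d g n))
    obtain ⟨hint, hval⟩ := indep_prod_integral hcomp
      (fun n => (hξm n).pow_const (d g n)) (fun n => hξe n (d g n)) (Finset.univ.image g)
    constructor
    · refine hint.congr ?_
      refine ae_of_all _ fun ω => ?_
      rw [Finset.prod_apply]
      exact (hUrw g ω).symm
    · calc ∫ ω, U g ω ∂P
          = ∫ ω, (∏ n ∈ Finset.univ.image g, fun ω' => ξ n ω' ^ d g n) ω ∂P := by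
            refine integral_congr_ae (ae_of_all _ fun ω => ?_)
            rw [Finset.prod_apply]
            exact hUrw g ω
        _ = ∏ n ∈ Finset.univ.image g, ∫ ω, ξ n ω ^ d g n ∂P := hval
        _ = ∏ n ∈ Finset.univ.image g, Mom (d g n) := by
            exact Finset.prod_congr rfl fun n _ => hξmom n (d g n)
  -- measurability and boundedness of V
  have hVmeas : ∀ g, Measurable (V g) := by
    intro g
    exact Finset.measurable_prod _ fun i _ => hc.comp (hXm (g i))
  have hVabs : ∀ g ω, |V g ω| ≤ 1 := by
    intro g ω
    rw [hV]
    calc |∏ i, c (X (g i) ω)| = ∏ i, |c (X (g i) ω)| := by rw [Finset.abs_prod]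
      _ ≤ 1 := Finset.prod_le_one (fun i _ => abs_nonneg _) (fun i _ => hc1 _)
  have hVint : ∀ g, Integrable (V g) P := by
    intro g
    refine Integrable.mono' (integrable_const (1:ℝ)) (hVmeas g).aestronglyMeasurable ?_
    exact ae_of_all _ fun ω => by simpa [Real.norm_eq_abs] using hVabs g ω
  have hVIbound : ∀ g, |∫ ω, V g ω ∂P| ≤ 1 := by
    intro g
    calc |∫ ω, V g ω ∂P| ≤ ∫ ω, |V g ω| ∂P := by
          simpa [Real.norm_eq_abs] using norm_integral_le_integral_norm (μ := P) (V g)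
      _ ≤ ∫ _ω, (1:ℝ) ∂P := integral_mono (hVint g).abs (integrable_const 1)
            (fun ω => hVabs g ω)
      _ = 1 := by simp
  -- independence of U and V
  have hUVindep : ∀ g, IndepFun (U g) (V g) P := by
    intro g
    have hφ : Measurable (fun v : Fin N → ℝ => ∏ i : Fin K, v (g i)) :=
      Finset.measurable_prod _ fun i _ => measurable_pi_apply (g i)
    have hψ : Measurable (fun v : Fin N → β => ∏ i : Fin K, c (v (g i))) :=
      Finset.measurable_prod _ fun i _ => hc.comp (measurable_pi_apply (g i))
    exact hIndep.comp hφ hψ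
  have hUVint : ∀ g, Integrable (fun ω => U g ω * V g ω) P := by
    intro g
    have := (hUVindep g).integrable_mul (hUfacts g).1 (hVint g)
    exact this
  -- integrability of the full power
  have hint_total : Integrable (fun ω => (∑ n, ξ n ω * c (X n ω)) ^ K) P := by
    have : Integrable (fun ω => ∑ g : Fin K → Fin N, U g ω * V g ω) P :=
      integrable_finset_sum _ fun g _ => hUVint g
    exact this.congr (ae_of_all _ fun ω => (hexp ω).symm)
  refine ⟨hint_total, ?_⟩
  -- compute the integral
  have hval_total : ∫ ω, (∑ n, ξ n ω * c (X n ω)) ^ K ∂P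
      = ∑ g : Fin K → Fin N, (∏ n ∈ Finset.univ.image g, Mom (d g n)) * ∫ ω, V g ω ∂P := by
    calc ∫ ω, (∑ n, ξ n ω * c (X n ω)) ^ K ∂P
        = ∫ ω, ∑ g : Fin K → Fin N, U g ω * V g ω ∂P :=
          integral_congr_ae (ae_of_all _ fun ω => hexp ω)
      _ = ∑ g : Fin K → Fin N, ∫ ω, U g ω * V g ω ∂P :=
          integral_finset_sum _ fun g _ => hUVint g
      _ = ∑ g : Fin K → Fin N, (∏ n ∈ Finset.univ.image g, Mom (d g n)) * ∫ ω, V g ω ∂P := by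
          refine Finset.sum_congr rfl fun g _ => ?_
          have h1 := (hUVindep g).integral_mul_eq_mul_integral (hUfacts g).1.aestronglyMeasurable (hVint g).aestronglyMeasurable
          have h2 : ∫ ω, U g ω * V g ω ∂P = (∫ ω, U g ω ∂P) * ∫ ω, V g ω ∂P := h1
          rw [h2, (hUfacts g).2]
  rw [hval_total]
  -- terms with an odd fiber vanish
  set Geven := Finset.univ.filter (fun g : Fin K → Fin N =>
    ∀ n ∈ Finset.univ.image g, Even (d g n)) with hGeven
  have hzero : ∀ g : Fin K → Fin N, ¬(∀ n ∈ Finset.univ.image g, Even (d g n)) →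
      (∏ n ∈ Finset.univ.image g, Mom (d g n)) * ∫ ω, V g ω ∂P = 0 := by
    intro g hg
    push_neg at hg
    obtain ⟨n, hn, hodd⟩ := hg
    have : Mom (d g n) = 0 := gauss_odd _ (Nat.odd_iff.mpr (Nat.not_even_iff.mp hodd))
    rw [Finset.prod_eq_zero hn this, zero_mul]
  have hfilter : ∑ g ∈ Geven, (∏ n ∈ Finset.univ.image g, Mom (d g n)) * ∫ ω, V g ω ∂P
      = ∑ g : Fin K → Fin N, (∏ n ∈ Finset.univ.image g, Mom (d g n)) * ∫ ω, V g ω ∂P := by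
    rw [hGeven]
    refine Finset.sum_filter_of_ne fun g _ hne => ?_
    by_contra h
    exact hne (hzero g h)
  rw [← hfilter]
  -- bound each remaining term
  have hterm : ∀ g ∈ Geven,
      (∏ n ∈ Finset.univ.image g, Mom (d g n)) * ∫ ω, V g ω ∂P ≤ Km m ^ K := by
    intro g _
    have h1 : |∏ n ∈ Finset.univ.image g, Mom (d g n)| ≤ Km m ^ K := by
      rw [Finset.abs_prod]
      calc ∏ n ∈ Finset.univ.image g, |Mom (d g n)|
          ≤ ∏ n ∈ Finset.univ.image g, Km m := by
            refine Finset.prod_le_prod (fun n _ => abs_nonneg _) fun n _ => ?_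
            refine Mom_abs_le m (d g n) ?_
            calc d g n ≤ (Finset.univ : Finset (Fin K)).card := Finset.card_filter_le _ _
              _ = K := by simp
        _ = Km m ^ (Finset.univ.image g).card := by rw [Finset.prod_const]
        _ ≤ Km m ^ K := by
            refine pow_le_pow_right₀ (Km_ge_one m) ?_
            calc (Finset.univ.image g).card ≤ (Finset.univ : Finset (Fin K)).card :=
                Finset.card_image_le
              _ = K := by simp
    calc (∏ n ∈ Finset.univ.image g, Mom (d g n)) * ∫ ω, V g ω ∂P
        ≤ |(∏ n ∈ Finset.univ.image g, Mom (d g n)) * ∫ ω, V g ω ∂P| := le_abs_self _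
      _ = |∏ n ∈ Finset.univ.image g, Mom (d g n)| * |∫ ω, V g ω ∂P| := abs_mul _ _
      _ ≤ Km m ^ K * 1 := by
          refine mul_le_mul h1 (hVIbound g) (abs_nonneg _) ?_
          exact le_trans (abs_nonneg _) h1
      _ = Km m ^ K := mul_one _
  calc ∑ g ∈ Geven, (∏ n ∈ Finset.univ.image g, Mom (d g n)) * ∫ ω, V g ω ∂P
      ≤ ∑ g ∈ Geven, Km m ^ K := Finset.sum_le_sum hterm
    _ = (Geven.card : ℝ) * Km m ^ K := by rw [Finset.sum_const, nsmul_eq_mul]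
    _ ≤ (((m + 1) * m ^ K * N ^ m : ℕ) : ℝ) * Km m ^ K := by
        refine mul_le_mul_of_nonneg_right ?_ ?_
        · exact_mod_cast count_even N m hN
        · exact pow_nonneg (le_trans zero_le_one (Km_ge_one m)) _
    _ = ((m : ℝ) + 1) * (m : ℝ) ^ K * Km m ^ K * (N : ℝ) ^ m := by
        push_cast
        ring

lemma ek_abs (k : ℤ × ℤ) (x : E2) : ‖ek k x‖ = 1 := by
  rw [ek, Complex.norm_exp]
  have : (2 * (Real.pi : ℂ) * Complex.I *
      ((k.1 : ℂ) * (x 0 : ℂ) + (k.2 : ℂ) * (x 1 : ℂ))).re = 0 := by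
    have : ((k.1 : ℂ) * (x 0 : ℂ) + (k.2 : ℂ) * (x 1 : ℂ))
        = (((k.1 : ℝ) * x 0 + (k.2 : ℝ) * x 1 : ℝ) : ℂ) := by push_cast; ring
    rw [this]
    simp [Complex.mul_re, Complex.mul_im]
  rw [this, Real.exp_zero]

lemma coord_measurable (i : Fin 2) : Measurable (fun x : E2 => x i) :=
  (EuclideanSpace.proj (𝕜 := ℝ) i).continuous.measurable

lemma ek_measurable (k : ℤ × ℤ) : Measurable (ek k) := by
  apply Complex.measurable_exp.comp
  refine Measurable.mul measurable_const (Measurable.add ?_ ?_)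
  · exact Measurable.mul measurable_const
      (Complex.measurable_ofReal.comp (coord_measurable 0))
  · exact Measurable.mul measurable_const
      (Complex.measurable_ofReal.comp (coord_measurable 1))

lemma ek_re_abs (k : ℤ × ℤ) (x : E2) : |(ek k x).re| ≤ 1 := by
  calc |(ek k x).re| ≤ ‖ek k x‖ := Complex.abs_re_le_norm _
    _ = 1 := ek_abs k x

lemma ek_im_abs (k : ℤ × ℤ) (x : E2) : |(ek k x).im| ≤ 1 := by
  calc |(ek k x).im| ≤ ‖ek k x‖ := Complex.abs_im_le_norm _
    _ = 1 := ek_abs k x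

/-- elementary: `(a+b)^m ≤ 2^m (a^m + b^m)` for nonnegative reals -/
lemma add_pow_le_two_pow (a b : ℝ) (ha : 0 ≤ a) (hb : 0 ≤ b) (m : ℕ) :
    (a + b) ^ m ≤ 2 ^ m * (a ^ m + b ^ m) := by
  have h1 : a + b ≤ 2 * max a b := by
    rcases le_total a b with h | h
    · calc a + b ≤ b + b := by linarith
        _ = 2 * b := by ring
        _ ≤ 2 * max a b := by have := le_max_right a b; linarith
    · calc a + b ≤ a + a := by linarith
        _ = 2 * a := by ring
        _ ≤ 2 * max a b := by have := le_max_left a b; linarith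
  calc (a + b) ^ m ≤ (2 * max a b) ^ m := pow_le_pow_left₀ (by linarith) h1 m
    _ = 2 ^ m * (max a b) ^ m := mul_pow 2 _ m
    _ ≤ 2 ^ m * (a ^ m + b ^ m) := by
        refine mul_le_mul_of_nonneg_left ?_ (by positivity)
        rcases max_cases a b with ⟨hm, _⟩ | ⟨hm, _⟩ <;> rw [hm]
        · have : (0:ℝ) ≤ b ^ m := pow_nonneg hb m
          linarith
        · have : (0:ℝ) ≤ a ^ m := pow_nonneg ha m
          linarith

lemma ennreal_rpow_le_one_add (z : ℝ≥0∞) {r s : ℝ} (hr : 0 ≤ r) (hrs : r ≤ s) :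
    z ^ r ≤ 1 + z ^ s := by
  rcases le_total z 1 with h | h
  · calc z ^ r ≤ 1 ^ r := ENNReal.rpow_le_rpow h hr
      _ = 1 := ENNReal.one_rpow r
      _ ≤ 1 + z ^ s := le_self_add
  · calc z ^ r ≤ z ^ s := ENNReal.rpow_le_rpow_of_exponent_le h hrs
      _ ≤ 1 + z ^ s := le_add_self

lemma tsum_toReal_eq {ι : Type*} (u : ι → ℝ) (hu : ∀ i, 0 ≤ u i) :
    ∑' i, u i = (∑' i, ENNReal.ofReal (u i)).toReal := by
  by_cases h : Summable u
  · rw [← ENNReal.ofReal_tsum_of_nonneg hu h, ENNReal.toReal_ofReal (tsum_nonneg hu)]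
  · rw [tsum_eq_zero_of_not_summable h]
    have htop : ∑' i, ENNReal.ofReal (u i) = ∞ := by
      by_contra hne
      refine h ((ENNReal.summable_toReal hne).congr fun i => ?_)
      exact ENNReal.toReal_ofReal (hu i)
    rw [htop]
    simp

lemma tsum_rpow_le (a Y : ℤ × ℤ → ℝ≥0∞) (ha0 : ∀ k, a k ≠ 0) (hat : ∀ k, a k ≠ ∞)
    (m : ℕ) (hm : 1 ≤ m) :
    (∑' k, a k * Y k) ^ (m : ℝ) ≤
      (∑' k, a k) ^ ((m : ℝ) - 1) * ∑' k, a k * Y k ^ (m : ℝ) := by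
  rcases eq_or_lt_of_le hm with h1 | h1
  · rw [← h1]
    push_cast
    rw [ENNReal.rpow_one]
    simp only [sub_self, ENNReal.rpow_zero, one_mul]
    exact le_of_eq (tsum_congr fun k => by rw [ENNReal.rpow_one])
  · have hm1 : (1:ℝ) < (m:ℝ) := by exact_mod_cast h1
    have hm0 : (m:ℝ) ≠ 0 := by linarith
    have hmm1 : (m:ℝ) - 1 ≠ 0 := by linarith
    set q : ℝ := (m:ℝ) / ((m:ℝ) - 1) with hqdef
    have hq0 : q ≠ 0 := by
      rw [hqdef]; exact div_ne_zero hm0 hmm1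
    have hpq : ((m:ℝ)).HolderConjugate q := Real.holderConjugate_iff.mpr ⟨hm1, by rw [hqdef]; field_simp; ring⟩
    set f : ℤ × ℤ → ℝ≥0∞ := fun k => a k ^ ((m:ℝ))⁻¹ * Y k with hfdef
    set g : ℤ × ℤ → ℝ≥0∞ := fun k => a k ^ q⁻¹ with hgdef
    have hprod : ∀ k, f k * g k = a k * Y k := by
      intro k
      rw [hfdef, hgdef]
      have : a k ^ ((m:ℝ))⁻¹ * a k ^ q⁻¹ = a k := by
        rw [← ENNReal.rpow_add _ _ (ha0 k) (hat k), hpq.inv_add_inv_eq_one, ENNReal.rpow_one]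
      calc a k ^ ((m:ℝ))⁻¹ * Y k * a k ^ q⁻¹
          = a k ^ ((m:ℝ))⁻¹ * a k ^ q⁻¹ * Y k := by ring
        _ = a k * Y k := by rw [this]
    have hH := ENNReal.lintegral_mul_le_Lp_mul_Lq Measure.count hpq
      (measurable_of_countable f).aemeasurable (measurable_of_countable g).aemeasurable
    have e1 : ∫⁻ k, (f * g) k ∂Measure.count = ∑' k, a k * Y k := by
      rw [lintegral_count]
      exact tsum_congr fun k => hprod k
    have e2 : ∫⁻ k, f k ^ (m:ℝ) ∂Measure.count = ∑' k, a k * Y k ^ (m:ℝ) := by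
      rw [lintegral_count]
      refine tsum_congr fun k => ?_
      rw [hfdef]
      rw [ENNReal.mul_rpow_of_nonneg _ _ (by linarith : (0:ℝ) ≤ (m:ℝ))]
      congr 1
      rw [← ENNReal.rpow_mul, inv_mul_cancel₀ hm0, ENNReal.rpow_one]
    have e3 : ∫⁻ k, g k ^ q ∂Measure.count = ∑' k, a k := by
      rw [lintegral_count]
      refine tsum_congr fun k => ?_
      rw [hgdef, ← ENNReal.rpow_mul, inv_mul_cancel₀ hq0, ENNReal.rpow_one]
    rw [e1, e2, e3] at hH
    have hfinal := ENNReal.rpow_le_rpow hH (by linarith : (0:ℝ) ≤ (m:ℝ))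
    calc (∑' k, a k * Y k) ^ (m:ℝ)
        ≤ ((∑' k, a k * Y k ^ (m:ℝ)) ^ (1 / (m:ℝ)) * (∑' k, a k) ^ (1 / q)) ^ (m:ℝ) := hfinal
      _ = (∑' k, a k) ^ ((m:ℝ) - 1) * ∑' k, a k * Y k ^ (m:ℝ) := by
          rw [ENNReal.mul_rpow_of_nonneg _ _ (by linarith : (0:ℝ) ≤ (m:ℝ))]
          rw [← ENNReal.rpow_mul, ← ENNReal.rpow_mul]
          rw [one_div_mul_eq_div, div_self hm0, ENNReal.rpow_one]
          have hqm : 1 / q * (m:ℝ) = (m:ℝ) - 1 := by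
            rw [hqdef]
            field_simp
          rw [hqm, mul_comm]

lemma sum1d_summable {δ : ℝ} (hδ : 0 < δ) :
    Summable (fun j : ℤ => (1 + (j:ℝ)^2) ^ ((-1-δ)/2)) := by
  have hb : (1:ℝ) < 1 + δ := by linarith
  have hg := Real.summable_abs_int_rpow hb
  have hsingle : Summable (fun j : ℤ => if j = 0 then (1:ℝ) else 0) := by
    refine summable_of_ne_finset_zero (s := {0}) fun j hj => ?_
    simp only [Finset.mem_singleton] at hj
    simp [hj]
  refine Summable.of_nonneg_of_le (fun j => Real.rpow_nonneg (by positivity) _)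
    (fun j => ?_) (hg.add hsingle)
  by_cases hj : j = 0
  · subst hj
    simp only [Int.cast_zero, abs_zero, if_true]
    rw [Real.zero_rpow (by linarith : -(1+δ) ≠ 0)]
    norm_num
  · simp only [hj, if_false, add_zero]
    have hj0 : ((j:ℝ)) ≠ 0 := Int.cast_ne_zero.mpr hj
    have h1 : (0:ℝ) < (j:ℝ)^2 := by positivity
    calc (1 + (j:ℝ)^2) ^ ((-1-δ)/2)
        ≤ ((j:ℝ)^2) ^ ((-1-δ)/2) :=
          Real.rpow_le_rpow_of_nonpos h1 (by linarith) (by linarith)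
      _ = |(j:ℝ)| ^ (-(1+δ)) := by
          rw [← sq_abs, ← Real.rpow_natCast |(j:ℝ)| 2, ← Real.rpow_mul (abs_nonneg _)]
          norm_num
          ring_nf

lemma twoD_bound {δ : ℝ} (hδ : 0 < δ) (a b : ℝ) (ha : 0 ≤ a) (hb : 0 ≤ b) :
    (1 + (a + b)) ^ (-1-δ) ≤ (1 + a) ^ ((-1-δ)/2) * (1 + b) ^ ((-1-δ)/2) := by
  have h1 : (1+a)*(1+b) ≤ (1+(a+b))^2 := by nlinarith
  have h2 : (1+(a+b)) ^ (-1-δ) = ((1+(a+b))^2) ^ ((-1-δ)/2) := by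
    rw [← Real.rpow_natCast (1+(a+b)) 2, ← Real.rpow_mul (by linarith)]
    norm_num
    ring_nf
  have h3 : ((1+(a+b))^2) ^ ((-1-δ)/2) ≤ ((1+a)*(1+b)) ^ ((-1-δ)/2) :=
    Real.rpow_le_rpow_of_nonpos (by positivity) h1 (by linarith)
  have h4 : ((1+a)*(1+b)) ^ ((-1-δ)/2) = (1+a) ^ ((-1-δ)/2) * (1+b) ^ ((-1-δ)/2) :=
    Real.mul_rpow (by linarith) (by linarith)
  rw [h2]
  rw [h4] at h3
  exact h3


/-- uniform bound for the `2m`-th moment of a single Fourier mode -/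
def Cm (m : ℕ) : ℝ := 2 ^ (m + 1) * ((m : ℝ) + 1) * (m : ℝ) ^ (2 * m) * Km m ^ (2 * m)

lemma Cm_nonneg (m : ℕ) : 0 ≤ Cm m := by
  have h1 : (0:ℝ) ≤ Km m := le_trans zero_le_one (Km_ge_one m)
  rw [Cm]
  refine mul_nonneg (mul_nonneg (mul_nonneg (by positivity) (by positivity)) (by positivity))
    (pow_nonneg h1 _)

lemma kmoment {N : ℕ} (m : ℕ) (hN : 0 < N)
    {Ξ : Type} {mΞ : MeasurableSpace Ξ} {P : Measure Ξ} [IsProbabilityMeasure P]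
    (ξ : Fin N → Ξ → ℝ) (X : Fin N → Ξ → E2)
    (hξm : ∀ n, Measurable (ξ n)) (hXm : ∀ n, Measurable (X n))
    (hξi : iIndepFun ξ P)
    (hξl : ∀ n, Measure.map (ξ n) P = gaussianReal 0 1)
    (hIndep : IndepFun (fun ω => fun n => ξ n ω) (fun ω => fun n => X n ω) P)
    (k : ℤ × ℤ) :
    ∫⁻ ω, (ENNReal.ofReal (‖((Real.sqrt N : ℝ) : ℂ)⁻¹ *
        ∑ n, (ξ n ω : ℂ) * ek k (X n ω)‖ ^ 2)) ^ (m : ℝ) ∂P ≤ ENNReal.ofReal (Cm m) := by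
  have hcore1 := core_moment m hN ξ X hξm hXm hξi hξl hIndep
    (fun x => (ek k x).re) (Complex.measurable_re.comp (ek_measurable k))
    (fun x => ek_re_abs k x)
  have hcore2 := core_moment m hN ξ X hξm hXm hξi hξl hIndep
    (fun x => (ek k x).im) (Complex.measurable_im.comp (ek_measurable k))
    (fun x => ek_im_abs k x)
  set W1 : Ξ → ℝ := fun ω => ∑ n, ξ n ω * (ek k (X n ω)).re with hW1
  set W2 : Ξ → ℝ := fun ω => ∑ n, ξ n ω * (ek k (X n ω)).im with hW2
  set B : ℝ := ((m : ℝ) + 1) * (m : ℝ) ^ (2 * m) * Km m ^ (2 * m) * (N : ℝ) ^ m with hB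
  have hNpos : (0:ℝ) < (N:ℝ) := by exact_mod_cast hN
  have habs : ∀ ω, ‖((Real.sqrt N : ℝ) : ℂ)⁻¹ *
      ∑ n, (ξ n ω : ℂ) * ek k (X n ω)‖ ^ 2 = (N:ℝ)⁻¹ * (W1 ω ^ 2 + W2 ω ^ 2) := by
    intro ω
    have hre : (∑ n, (ξ n ω : ℂ) * ek k (X n ω)).re = W1 ω := by
      rw [Complex.re_sum]
      exact Finset.sum_congr rfl fun n _ => by simp [Complex.mul_re]
    have him : (∑ n, (ξ n ω : ℂ) * ek k (X n ω)).im = W2 ω := by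
      rw [Complex.im_sum]
      exact Finset.sum_congr rfl fun n _ => by simp [Complex.mul_im]
    rw [norm_mul, mul_pow, norm_inv, Complex.norm_real,
      Real.norm_of_nonneg (Real.sqrt_nonneg _), Complex.sq_norm, Complex.normSq_apply, hre, him]
    rw [inv_pow, Real.sq_sqrt (by positivity : (0:ℝ) ≤ (N:ℝ))]
    ring
  set D : Ξ → ℝ := fun ω => (N:ℝ)⁻¹ ^ m * (2 ^ m * (W1 ω ^ (2*m) + W2 ω ^ (2*m))) with hD
  have hDnn : ∀ ω, 0 ≤ D ω := by
    intro ω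
    have h1 : (0:ℝ) ≤ W1 ω ^ (2*m) := by rw [pow_mul]; positivity
    have h2 : (0:ℝ) ≤ W2 ω ^ (2*m) := by rw [pow_mul]; positivity
    rw [hD]
    positivity
  have hDint : Integrable D P := ((hcore1.1.add hcore2.1).const_mul _).const_mul _
  have hpt : ∀ ω, (ENNReal.ofReal (‖((Real.sqrt N : ℝ) : ℂ)⁻¹ *
      ∑ n, (ξ n ω : ℂ) * ek k (X n ω)‖ ^ 2)) ^ (m : ℝ) ≤ ENNReal.ofReal (D ω) := by
    intro ω
    rw [ENNReal.rpow_natCast, ← ENNReal.ofReal_pow (by positivity)]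
    refine ENNReal.ofReal_le_ofReal ?_
    rw [habs ω, mul_pow]
    refine mul_le_mul_of_nonneg_left ?_ (by positivity)
    calc (W1 ω ^ 2 + W2 ω ^ 2) ^ m
        ≤ 2 ^ m * ((W1 ω ^ 2) ^ m + (W2 ω ^ 2) ^ m) :=
          add_pow_le_two_pow _ _ (sq_nonneg _) (sq_nonneg _) m
      _ = 2 ^ m * (W1 ω ^ (2*m) + W2 ω ^ (2*m)) := by rw [← pow_mul, ← pow_mul]
  calc ∫⁻ ω, (ENNReal.ofReal (‖((Real.sqrt N : ℝ) : ℂ)⁻¹ *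
        ∑ n, (ξ n ω : ℂ) * ek k (X n ω)‖ ^ 2)) ^ (m : ℝ) ∂P
      ≤ ∫⁻ ω, ENNReal.ofReal (D ω) ∂P := lintegral_mono hpt
    _ = ENNReal.ofReal (∫ ω, D ω ∂P) :=
        (ofReal_integral_eq_lintegral_ofReal hDint (ae_of_all _ hDnn)).symm
    _ ≤ ENNReal.ofReal (Cm m) := by
        refine ENNReal.ofReal_le_ofReal ?_
        have hval : ∫ ω, D ω ∂P
            = (N:ℝ)⁻¹ ^ m * (2 ^ m * ((∫ ω, W1 ω ^ (2*m) ∂P) + ∫ ω, W2 ω ^ (2*m) ∂P)) := by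
          rw [hD]
          rw [integral_const_mul, integral_const_mul, integral_add hcore1.1 hcore2.1]
        rw [hval]
        have hsum : (∫ ω, W1 ω ^ (2*m) ∂P) + (∫ ω, W2 ω ^ (2*m) ∂P) ≤ B + B :=
          add_le_add hcore1.2 hcore2.2
        have hinv : (0:ℝ) ≤ (N:ℝ)⁻¹ ^ m := by positivity
        calc (N:ℝ)⁻¹ ^ m * (2 ^ m * ((∫ ω, W1 ω ^ (2*m) ∂P) + ∫ ω, W2 ω ^ (2*m) ∂P))
            ≤ (N:ℝ)⁻¹ ^ m * (2 ^ m * (B + B)) := by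
              refine mul_le_mul_of_nonneg_left ?_ hinv
              refine mul_le_mul_of_nonneg_left hsum (by positivity)
          _ = Cm m := by
              have hcancel : (N:ℝ)⁻¹ ^ m * (N:ℝ) ^ m = 1 := by
                rw [← mul_pow, inv_mul_cancel₀ (ne_of_gt hNpos), one_pow]
              rw [Cm, hB]
              calc (N:ℝ)⁻¹ ^ m * (2 ^ m * ((((m : ℝ) + 1) * (m : ℝ) ^ (2 * m) * Km m ^ (2 * m) * (N : ℝ) ^ m) + (((m : ℝ) + 1) * (m : ℝ) ^ (2 * m) * Km m ^ (2 * m) * (N : ℝ) ^ m)))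
                  = (2 ^ (m+1) * ((m : ℝ) + 1) * (m : ℝ) ^ (2 * m) * Km m ^ (2 * m)) * ((N:ℝ)⁻¹ ^ m * (N:ℝ) ^ m) := by ring
                _ = 2 ^ (m+1) * ((m : ℝ) + 1) * (m : ℝ) ^ (2 * m) * Km m ^ (2 * m) := by
                    rw [hcancel, mul_one]

end Stmt18Aux

/-- uniform moment bounds for the random vortex field
`θ^N = N^{-1/2} Σ_n ξ_n δ_{X^n}` with i.i.d. `N(0,1)` intensities and i.i.d. uniform
positions, independent of each other: for all `p ≥ 1`, `δ > 0` there is `c_{p,δ}` with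
`E‖θ^N‖^p_{H^{-1-δ}} ≤ c_{p,δ}`, uniformly in `N`, where
`‖θ‖²_{H^{-1-δ}} = Σ_k (1+|k|²)^{-1-δ} |⟨θ,e_k⟩|²`. -/
theorem stmt18 (p δ : ℝ) (hp : 1 ≤ p) (hδ : 0 < δ) :
    ∃ c > (0:ℝ), ∀ (N : ℕ), 0 < N →
      ∀ (Ξ : Type) (mΞ : MeasurableSpace Ξ) (P : Measure Ξ), IsProbabilityMeasure P →
      ∀ (ξ : Fin N → Ξ → ℝ) (X : Fin N → Ξ → E2),
      (∀ n, Measurable (ξ n)) → (∀ n, Measurable (X n)) →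
      iIndepFun ξ P →
      (∀ n, Measure.map (ξ n) P = gaussianReal 0 1) →
      iIndepFun X P →
      (∀ n, Measure.map (X n) P = μT) →
      IndepFun (fun ω => fun n => ξ n ω) (fun ω => fun n => X n ω) P →
      ∫ ω, (∑' k : ℤ × ℤ, (1 + nsq k) ^ (-1 - δ) *
          ‖((Real.sqrt N : ℝ) : ℂ)⁻¹ * ∑ n, (ξ n ω : ℂ) * ek k (X n ω)‖ ^ 2)
        ^ (p / 2) ∂P ≤ c := by
  classical
  set m : ℕ := max 1 ⌈p / 2⌉₊ with hmdef
  have hm1 : 1 ≤ m := le_max_left _ _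
  have hpm : p / 2 ≤ (m : ℝ) := by
    refine le_trans (Nat.le_ceil _) ?_
    exact_mod_cast le_max_right 1 ⌈p / 2⌉₊
  have hp2 : (0:ℝ) ≤ p / 2 := by linarith
  have hm1R : (1:ℝ) ≤ (m:ℝ) := by exact_mod_cast hm1
  set a : ℤ × ℤ → ℝ≥0∞ := fun k => ENNReal.ofReal ((1 + nsq k) ^ (-1 - δ)) with hadef
  have hbase : ∀ k : ℤ × ℤ, (0:ℝ) < 1 + nsq k := by
    intro k
    have : 0 ≤ nsq k := by rw [nsq]; positivity
    linarith
  have ha0 : ∀ k, a k ≠ 0 := by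
    intro k
    simp only [hadef, ne_eq, ENNReal.ofReal_eq_zero, not_le]
    exact Real.rpow_pos_of_pos (hbase k) _
  have hat : ∀ k, a k ≠ ∞ := fun k => ENNReal.ofReal_ne_top
  set S : ℝ≥0∞ := ∑' k, a k with hSdef
  have hS_ne_top : S ≠ ∞ := by
    set u : ℤ → ℝ≥0∞ := fun j => ENNReal.ofReal ((1 + (j:ℝ)^2) ^ ((-1-δ)/2)) with hu
    have hu_ne : (∑' j, u j) ≠ ∞ := by
      rw [hu, ← ENNReal.ofReal_tsum_of_nonneg (fun j => Real.rpow_nonneg (by positivity) _)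
        (Stmt18Aux.sum1d_summable hδ)]
      exact ENNReal.ofReal_ne_top
    have hle : S ≤ (∑' j, u j) * (∑' j, u j) := by
      rw [hSdef]
      calc ∑' k, a k ≤ ∑' (k : ℤ × ℤ), u k.1 * u k.2 := by
            refine ENNReal.tsum_le_tsum fun k => ?_
            rw [hadef, hu, ← ENNReal.ofReal_mul (Real.rpow_nonneg (by positivity) _)]
            refine ENNReal.ofReal_le_ofReal ?_
            have h2d := Stmt18Aux.twoD_bound hδ ((k.1:ℝ)^2) ((k.2:ℝ)^2)
              (by positivity) (by positivity)
            rw [nsq]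
            exact h2d
        _ = ∑' (i : ℤ), ∑' (j : ℤ), u i * u j := ENNReal.tsum_prod (f := fun i j => u i * u j)
        _ = ∑' (i : ℤ), u i * ∑' (j : ℤ), u j := tsum_congr fun i => ENNReal.tsum_mul_left
        _ = (∑' j, u j) * (∑' j, u j) := ENNReal.tsum_mul_right
    exact ne_top_of_le_ne_top (ENNReal.mul_ne_top hu_ne hu_ne) hle
  set sc : ℝ := S.toReal with hsc
  have hsc_nn : (0:ℝ) ≤ sc := ENNReal.toReal_nonneg
  have hSofReal : S = ENNReal.ofReal sc := (ENNReal.ofReal_toReal hS_ne_top).symm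
  set c : ℝ := 1 + sc ^ ((m:ℝ) - 1) * (sc * Stmt18Aux.Cm m) with hcdef
  have hc_aux : 0 ≤ sc ^ ((m:ℝ) - 1) * (sc * Stmt18Aux.Cm m) :=
    mul_nonneg (Real.rpow_nonneg hsc_nn _) (mul_nonneg hsc_nn (Stmt18Aux.Cm_nonneg m))
  have hc_pos : 0 < c := by rw [hcdef]; linarith
  refine ⟨c, hc_pos, ?_⟩
  intro N hN Ξ mΞ P hP ξ X hξm hXm hξi hξl hXi hXl hIndep
  set Y : ℤ × ℤ → Ξ → ℝ≥0∞ := fun k ω => ENNReal.ofReal (‖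
    ((Real.sqrt N : ℝ) : ℂ)⁻¹ * ∑ n, (ξ n ω : ℂ) * ek k (X n ω)‖ ^ 2) with hYdef
  have hYmeas : ∀ k, Measurable (Y k) := by
    intro k
    apply ENNReal.measurable_ofReal.comp
    apply Measurable.pow_const
    apply continuous_norm.measurable.comp
    apply Measurable.const_mul
    refine Finset.measurable_sum _ fun n _ => ?_
    exact (Complex.measurable_ofReal.comp (hξm n)).mul
      ((Stmt18Aux.ek_measurable k).comp (hXm n))
  set Z : Ξ → ℝ≥0∞ := fun ω => ∑' k, a k * Y k ω with hZdef
  have hZmeas : Measurable Z := Measurable.ennreal_tsum fun k => (hYmeas k).const_mul _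
  have hterm_nonneg : ∀ (k : ℤ × ℤ) (ω : Ξ), 0 ≤ (1 + nsq k) ^ (-1 - δ) *
      ‖((Real.sqrt N : ℝ) : ℂ)⁻¹ * ∑ n, (ξ n ω : ℂ) * ek k (X n ω)‖ ^ 2 := by
    intro k ω
    have h1 := hbase k
    positivity
  have hrw : ∀ ω, (∑' k : ℤ × ℤ, (1 + nsq k) ^ (-1 - δ) *
      ‖((Real.sqrt N : ℝ) : ℂ)⁻¹ * ∑ n, (ξ n ω : ℂ) * ek k (X n ω)‖ ^ 2) ^ (p / 2)
      = ((Z ω).toReal) ^ (p / 2) := by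
    intro ω
    congr 1
    rw [Stmt18Aux.tsum_toReal_eq _ (fun k => hterm_nonneg k ω), hZdef]
    congr 1
    refine tsum_congr fun k => ?_
    rw [hadef, hYdef, ← ENNReal.ofReal_mul (Real.rpow_nonneg (le_of_lt (hbase k)) _)]
  have hL : ∫⁻ ω, ENNReal.ofReal (((Z ω).toReal) ^ (p / 2)) ∂P ≤ ENNReal.ofReal c := by
    have hpt : ∀ ω, ENNReal.ofReal (((Z ω).toReal) ^ (p / 2))
        ≤ 1 + S ^ ((m:ℝ) - 1) * ∑' k, a k * (Y k ω) ^ (m:ℝ) := by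
      intro ω
      calc ENNReal.ofReal (((Z ω).toReal) ^ (p / 2))
          = (ENNReal.ofReal ((Z ω).toReal)) ^ (p / 2) :=
            (ENNReal.ofReal_rpow_of_nonneg ENNReal.toReal_nonneg hp2).symm
        _ ≤ (Z ω) ^ (p / 2) := ENNReal.rpow_le_rpow ENNReal.ofReal_toReal_le hp2
        _ ≤ 1 + (Z ω) ^ ((m:ℝ)) := Stmt18Aux.ennreal_rpow_le_one_add _ hp2 hpm
        _ ≤ 1 + S ^ ((m:ℝ) - 1) * ∑' k, a k * (Y k ω) ^ (m:ℝ) := by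
            refine add_le_add_right ?_ 1
            rw [hZdef, hSdef]
            exact Stmt18Aux.tsum_rpow_le a (fun k => Y k ω) ha0 hat m hm1
    have hS_rpow_ne_top : S ^ ((m:ℝ) - 1) ≠ ∞ :=
      ENNReal.rpow_ne_top_of_nonneg (by linarith) hS_ne_top
    calc ∫⁻ ω, ENNReal.ofReal (((Z ω).toReal) ^ (p / 2)) ∂P
        ≤ ∫⁻ ω, (1 + S ^ ((m:ℝ) - 1) * ∑' k, a k * (Y k ω) ^ (m:ℝ)) ∂P := lintegral_mono hpt
      _ = 1 + S ^ ((m:ℝ) - 1) * ∫⁻ ω, ∑' k, a k * (Y k ω) ^ (m:ℝ) ∂P := by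
          rw [lintegral_add_left measurable_const, lintegral_const, measure_univ, mul_one,
            lintegral_const_mul' _ _ hS_rpow_ne_top]
      _ ≤ 1 + S ^ ((m:ℝ) - 1) * (S * ENNReal.ofReal (Stmt18Aux.Cm m)) := by
          refine add_le_add_right (mul_le_mul_right ?_ _) 1
          calc ∫⁻ ω, ∑' k, a k * (Y k ω) ^ (m:ℝ) ∂P
              = ∑' k, ∫⁻ ω, a k * (Y k ω) ^ (m:ℝ) ∂P :=
                lintegral_tsum fun k =>
                  (((hYmeas k).pow measurable_const).const_mul _).aemeasurable
            _ = ∑' k, a k * ∫⁻ ω, (Y k ω) ^ (m:ℝ) ∂P := by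
                exact tsum_congr fun k => lintegral_const_mul' _ _ (hat k)
            _ ≤ ∑' k, a k * ENNReal.ofReal (Stmt18Aux.Cm m) := by
                refine ENNReal.tsum_le_tsum fun k => mul_le_mul_right ?_ _
                exact Stmt18Aux.kmoment m hN ξ X hξm hXm hξi hξl hIndep k
            _ = S * ENNReal.ofReal (Stmt18Aux.Cm m) := by
                rw [hSdef]; exact ENNReal.tsum_mul_right
      _ = ENNReal.ofReal c := by
          rw [hSofReal, ENNReal.ofReal_rpow_of_nonneg hsc_nn (by linarith : (0:ℝ) ≤ (m:ℝ) - 1),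
            ← ENNReal.ofReal_mul hsc_nn,
            ← ENNReal.ofReal_mul (Real.rpow_nonneg hsc_nn _), ← ENNReal.ofReal_one,
            ← ENNReal.ofReal_add zero_le_one hc_aux, hcdef]
  calc ∫ ω, (∑' k : ℤ × ℤ, (1 + nsq k) ^ (-1 - δ) *
          ‖((Real.sqrt N : ℝ) : ℂ)⁻¹ * ∑ n, (ξ n ω : ℂ) * ek k (X n ω)‖ ^ 2)
        ^ (p / 2) ∂P
      = ∫ ω, ((Z ω).toReal) ^ (p / 2) ∂P := integral_congr_ae (ae_of_all _ hrw)
    _ = (∫⁻ ω, ENNReal.ofReal (((Z ω).toReal) ^ (p / 2)) ∂P).toReal := by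
        refine integral_eq_lintegral_of_nonneg_ae
          (ae_of_all _ fun ω => Real.rpow_nonneg ENNReal.toReal_nonneg _) ?_
        exact ((ENNReal.measurable_toReal.comp hZmeas).pow
          measurable_const).aestronglyMeasurable
    _ ≤ c := by
        calc (∫⁻ ω, ENNReal.ofReal (((Z ω).toReal) ^ (p / 2)) ∂P).toReal
            ≤ (ENNReal.ofReal c).toReal := ENNReal.toReal_mono ENNReal.ofReal_ne_top hL
          _ = c := ENNReal.toReal_ofReal hc_pos.le
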